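/- Let α, μ, ζ, η be real parameters with α < 0. Then the sequence of gaps ω_{k+1}^− − ω_k^− tends to −∞ as the integer k tends to +∞. -/

import Mathlib

/-- The frequency `ω_k^+` from the spectral analysis of the linearized coupled
KdV system (set to `0` when `k = 0`). -/
noncomputable def omegaP (α μ ζ η : ℝ) (k : ℤ) : ℝ :=
  if k = 0 then 0 else
    ((k : ℝ) ^ 3 / 2) *
      ((1 + α) - (ζ + μ) / (k : ℝ) ^ 2 +
        Real.sqrt (((1 - α) + (ζ - μ) / (k : ℝ) ^ 2) ^ 2 + 4 * η ^ 2 / (k : ℝ) ^ 4))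

/-- The frequency `ω_k^-` from the spectral analysis of the linearized coupled
KdV system (set to `0` when `k = 0`). -/
noncomputable def omegaM (α μ ζ η : ℝ) (k : ℤ) : ℝ :=
  if k = 0 then 0 else
    ((k : ℝ) ^ 3 / 2) *
      ((1 + α) - (ζ + μ) / (k : ℝ) ^ 2 -
        Real.sqrt (((1 - α) + (ζ - μ) / (k : ℝ) ^ 2) ^ 2 + 4 * η ^ 2 / (k : ℝ) ^ 4))

lemma omegaM_sub_cube_bound (α μ ζ η : ℝ) (hα : α < 0) (k : ℤ) (hk : k ≠ 0) :
    |omegaM α μ ζ η k - α * (k : ℝ) ^ 3| ≤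
      (|ζ + μ| + |ζ - μ| + 2 * |η|) * |(k : ℝ)| / 2 := by
  have hk' : (k : ℝ) ≠ 0 := Int.cast_ne_zero.mpr hk
  have hk2 : (0 : ℝ) < (k : ℝ) ^ 2 := by positivity
  set a : ℝ := (1 - α) + (ζ - μ) / (k : ℝ) ^ 2 with ha
  set s : ℝ := Real.sqrt (a ^ 2 + 4 * η ^ 2 / (k : ℝ) ^ 4) with hs
  have habs_a : |a| ≤ (1 - α) + |ζ - μ| / (k : ℝ) ^ 2 := by
    have h1 : |(ζ - μ) / (k : ℝ) ^ 2| = |ζ - μ| / (k : ℝ) ^ 2 := by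
      rw [abs_div, abs_of_pos hk2]
    calc |a| ≤ |(1 - α)| + |(ζ - μ) / (k : ℝ) ^ 2| := abs_add_le _ _
      _ = (1 - α) + |ζ - μ| / (k : ℝ) ^ 2 := by
          rw [h1, abs_of_pos (by linarith : (0:ℝ) < 1 - α)]
  have hs1 : (1 - α) - |ζ - μ| / (k : ℝ) ^ 2 ≤ s := by
    have h1 : |a| ≤ s := by
      rw [hs, ← Real.sqrt_sq_eq_abs]
      exact Real.sqrt_le_sqrt (le_add_of_nonneg_right (by positivity))
    have h2 : -(|ζ - μ| / (k : ℝ) ^ 2) ≤ (ζ - μ) / (k : ℝ) ^ 2 := by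
      rw [← neg_div]
      exact div_le_div_of_nonneg_right (neg_abs_le _) hk2.le
    have h3 : a ≤ |a| := le_abs_self a
    simp only [ha] at h3
    linarith
  have hs2 : s ≤ (1 - α) + |ζ - μ| / (k : ℝ) ^ 2 + 2 * |η| / (k : ℝ) ^ 2 := by
    have hb : (0:ℝ) ≤ 2 * |η| / (k : ℝ) ^ 2 := by positivity
    have key : a ^ 2 + 4 * η ^ 2 / (k : ℝ) ^ 4 ≤ (|a| + 2 * |η| / (k : ℝ) ^ 2) ^ 2 := by
      have h1 : (2 * |η| / (k : ℝ) ^ 2) ^ 2 = 4 * η ^ 2 / (k : ℝ) ^ 4 := by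
        rw [div_pow, mul_pow, sq_abs]; ring
      have h2 : (0:ℝ) ≤ |a| * (2 * |η| / (k : ℝ) ^ 2) := by positivity
      have expand : (|a| + 2 * |η| / (k : ℝ) ^ 2) ^ 2 =
          |a| ^ 2 + 2 * (|a| * (2 * |η| / (k : ℝ) ^ 2)) + (2 * |η| / (k : ℝ) ^ 2) ^ 2 := by
        ring
      rw [expand, sq_abs, h1]
      linarith
    calc s ≤ Real.sqrt ((|a| + 2 * |η| / (k : ℝ) ^ 2) ^ 2) := Real.sqrt_le_sqrt key
      _ = |a| + 2 * |η| / (k : ℝ) ^ 2 := Real.sqrt_sq (by positivity)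
      _ ≤ (1 - α) + |ζ - μ| / (k : ℝ) ^ 2 + 2 * |η| / (k : ℝ) ^ 2 := by linarith
  have heq : omegaM α μ ζ η k - α * (k : ℝ) ^ 3 =
      ((k : ℝ) ^ 3 / 2) * ((1 + α) - (ζ + μ) / (k : ℝ) ^ 2 - s - 2 * α) := by
    rw [omegaM, if_neg hk, ← hs]; ring
  have hE : |(1 + α) - (ζ + μ) / (k : ℝ) ^ 2 - s - 2 * α| ≤
      (|ζ + μ| + |ζ - μ| + 2 * |η|) / (k : ℝ) ^ 2 := by
    have d1 : (ζ + μ) / (k : ℝ) ^ 2 ≤ |ζ + μ| / (k : ℝ) ^ 2 :=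
      div_le_div_of_nonneg_right (le_abs_self _) hk2.le
    have d2 : -(|ζ + μ| / (k : ℝ) ^ 2) ≤ (ζ + μ) / (k : ℝ) ^ 2 := by
      rw [← neg_div]
      exact div_le_div_of_nonneg_right (neg_abs_le _) hk2.le
    have hsum : (|ζ + μ| + |ζ - μ| + 2 * |η|) / (k : ℝ) ^ 2 =
        |ζ + μ| / (k : ℝ) ^ 2 + |ζ - μ| / (k : ℝ) ^ 2 + 2 * |η| / (k : ℝ) ^ 2 := by ring
    have hb : (0:ℝ) ≤ 2 * |η| / (k : ℝ) ^ 2 := by positivity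
    rw [abs_le]
    constructor
    · linarith
    · linarith
  rw [heq, abs_mul]
  have h3 : |(k : ℝ) ^ 3 / 2| = |(k : ℝ)| * (k : ℝ) ^ 2 / 2 := by
    rw [abs_div, abs_pow, abs_of_pos (two_pos : (0:ℝ) < 2)]
    congr 1
    rw [pow_succ', sq_abs]
  rw [h3]
  calc |(k : ℝ)| * (k : ℝ) ^ 2 / 2 * |(1 + α) - (ζ + μ) / (k : ℝ) ^ 2 - s - 2 * α|
      ≤ |(k : ℝ)| * (k : ℝ) ^ 2 / 2 * ((|ζ + μ| + |ζ - μ| + 2 * |η|) / (k : ℝ) ^ 2) :=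
        mul_le_mul_of_nonneg_left hE (by positivity)
    _ = (|ζ + μ| + |ζ - μ| + 2 * |η|) * |(k : ℝ)| / 2 := by
        field_simp

/-- If `α < 0` then the gaps `ω_{k+1}^- − ω_k^-` tend to `−∞` as `k → +∞`. -/
theorem omegaM_gap_tendsto_atBot (α μ ζ η : ℝ) (hα : α < 0) :
    Filter.Tendsto (fun k : ℤ => omegaM α μ ζ η (k + 1) - omegaM α μ ζ η k)
      Filter.atTop Filter.atBot := by
  set C : ℝ := |ζ + μ| + |ζ - μ| + 2 * |η| with hC
  have hC0 : 0 ≤ C := by positivity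
  -- the dominating function
  have hdom : Filter.Tendsto (fun k : ℤ => 3 * α * (k : ℝ) ^ 2 + (3 * α + C + 1) * (k : ℝ) + (α + C))
      Filter.atTop Filter.atBot := by
    have hcast : Filter.Tendsto (fun k : ℤ => (k : ℝ)) Filter.atTop Filter.atTop :=
      tendsto_intCast_atTop_atTop
    have hlin : Filter.Tendsto (fun k : ℤ => 3 * α * (k : ℝ) + (3 * α + C + 1))
        Filter.atTop Filter.atBot := by
      apply Filter.tendsto_atBot_add_const_right
      exact (Filter.tendsto_const_mul_atBot_of_neg (by linarith)).mpr hcast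
    have hmul := hcast.atTop_mul_atBot₀ hlin
    have := Filter.tendsto_atBot_add_const_right _ (α + C) hmul
    refine this.congr (fun k => ?_)
    ring
  refine Filter.tendsto_atBot_mono' _ ?_ hdom
  filter_upwards [Filter.eventually_ge_atTop (1 : ℤ)] with k hk1
  have hk0 : k ≠ 0 := by omega
  have hk10 : k + 1 ≠ 0 := by omega
  have hb1 := omegaM_sub_cube_bound α μ ζ η hα (k + 1) hk10
  have hb2 := omegaM_sub_cube_bound α μ ζ η hα k hk0
  have hkr : (1 : ℝ) ≤ (k : ℝ) := by exact_mod_cast hk1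
  have ha1 : |((k + 1 : ℤ) : ℝ)| = (k : ℝ) + 1 := by
    push_cast
    rw [abs_of_pos (by linarith)]
  have ha2 : |(k : ℝ)| = (k : ℝ) := abs_of_pos (by linarith)
  rw [ha1] at hb1
  rw [ha2] at hb2
  have hc1 : ((k + 1 : ℤ) : ℝ) = (k : ℝ) + 1 := by push_cast; ring
  rw [hc1] at hb1
  have h1 := abs_le.mp hb1
  have h2 := abs_le.mp hb2
  have hαk : α * (k : ℝ) ≤ 0 := mul_nonpos_of_nonpos_of_nonneg hα.le (by linarith)
  nlinarith [h1.2, h2.1, mul_nonneg hC0 (by linarith : (0:ℝ) ≤ (k:ℝ))]
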